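/- Fix m ∈ ℤ⁺ and r ∈ ℕ. Let X be a finite set and st : X → ℕ a function. Suppose that for every l ∈ ℤ/mℤ and every 0 ≤ j ≤ r-1, Σ_{x ∈ X, st(x) ≡ l (mod 2m)} C(st(x), j) = Σ_{x ∈ X, st(x) ≡ l+m (mod 2m)} C(st(x), j). Then the polynomial Σ_{x ∈ X} q^{st(x)} is divisible by (1+q^m)^r in ℤ[q]. -/

import Mathlib

open Finset Polynomial

/-- If all Hasse derivatives of `P` up to order `r-1` vanish at `ζ`, then `(X-ζ)^r ∣ P`. -/
lemma aux_pow_sub_dvd {K : Type*} [Field K] (P : K[X]) (ζ : K) (r : ℕ)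
    (h : ∀ i < r, (Polynomial.hasseDeriv i P).eval ζ = 0) :
    (X - C ζ) ^ r ∣ P := by
  conv_rhs => rw [← Polynomial.sum_taylor_eq P ζ]
  rw [Polynomial.sum_def]
  apply Finset.dvd_sum
  intro i hi
  by_cases hir : i < r
  · have h0 : (Polynomial.taylor ζ P).coeff i = 0 := by
      rw [Polynomial.taylor_coeff]; exact h i hir
    rw [Polynomial.mem_support_iff] at hi
    exact absurd h0 hi
  · exact Dvd.dvd.mul_left (pow_dvd_pow _ (le_of_not_gt hir)) _

/-- The key vanishing of Hasse derivatives at a root `ζ` of `X^m + 1`. -/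
lemma aux_hasse_vanish (m r : ℕ) (hm : 1 ≤ m) {X : Type*} [Fintype X] (st : X → ℕ)
    (h : ∀ l < m, ∀ j < r,
      ∑ x ∈ Finset.univ.filter (fun x => st x % (2 * m) = l), (st x).choose j =
      ∑ x ∈ Finset.univ.filter (fun x => st x % (2 * m) = l + m), (st x).choose j)
    (ζ : ℂ) (hζ : ζ ^ m = -1) :
    ∀ i < r, (Polynomial.hasseDeriv i (∑ x : X, (Polynomial.X : Polynomial ℂ) ^ st x)).eval ζ = 0 := by
  classical
  intro i hir
  have hζ0 : ζ ≠ 0 := by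
    intro h0
    rw [h0, zero_pow (by omega)] at hζ
    norm_num at hζ
  have h2m : ζ ^ (2 * m) = 1 := by
    rw [two_mul, pow_add, hζ]; ring
  have hkey : ∀ n : ℕ, ζ ^ n = ζ ^ (n % (2 * m)) := by
    intro n
    conv_lhs => rw [← Nat.div_add_mod n (2 * m)]
    rw [pow_add, pow_mul, h2m, one_pow, one_mul]
  have hs : ∑ x : X, ((st x).choose i : ℂ) * ζ ^ (st x) = 0 := by
    have hmap : ∀ x : X, x ∈ (Finset.univ : Finset X) → st x % (2 * m) ∈ Finset.range (2 * m) := by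
      intro x _
      exact Finset.mem_range.mpr (Nat.mod_lt _ (by omega))
    calc ∑ x : X, ((st x).choose i : ℂ) * ζ ^ (st x)
        = ∑ x : X, ((st x).choose i : ℂ) * ζ ^ (st x % (2 * m)) := by
          refine Finset.sum_congr rfl fun x _ => ?_
          rw [hkey]
      _ = ∑ s ∈ Finset.range (2 * m), ∑ x ∈ Finset.univ.filter (fun x => st x % (2 * m) = s),
            ((st x).choose i : ℂ) * ζ ^ (st x % (2 * m)) :=
          (Finset.sum_fiberwise_of_maps_to hmap _).symm
      _ = ∑ s ∈ Finset.range (2 * m),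
            (∑ x ∈ Finset.univ.filter (fun x => st x % (2 * m) = s), ((st x).choose i : ℕ) : ℕ) * ζ ^ s := by
          refine Finset.sum_congr rfl fun s _ => ?_
          rw [Nat.cast_sum, Finset.sum_mul]
          refine Finset.sum_congr rfl fun x hx => ?_
          rw [Finset.mem_filter] at hx
          rw [hx.2]
      _ = 0 := by
          have hsplit2 := Finset.sum_range_add (fun s =>
            ((∑ x ∈ Finset.univ.filter (fun x => st x % (2 * m) = s), (st x).choose i : ℕ) : ℂ)
              * ζ ^ s) m m
          rw [← two_mul] at hsplit2
          rw [hsplit2]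
          have : ∀ l ∈ Finset.range m,
              ((∑ x ∈ Finset.univ.filter (fun x => st x % (2 * m) = m + l), (st x).choose i : ℕ) : ℂ)
                * ζ ^ (m + l)
              = -(((∑ x ∈ Finset.univ.filter (fun x => st x % (2 * m) = l), (st x).choose i : ℕ) : ℂ)
                * ζ ^ l) := by
            intro l hl
            rw [Finset.mem_range] at hl
            have hA : (∑ x ∈ Finset.univ.filter (fun x => st x % (2 * m) = m + l), (st x).choose i)
                = ∑ x ∈ Finset.univ.filter (fun x => st x % (2 * m) = l), (st x).choose i := by
              rw [add_comm m l]
              exact (h l hl i hir).symm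
            rw [hA, pow_add, hζ]
            ring
          rw [Finset.sum_congr rfl this, ← Finset.sum_add_distrib]
          simp
  have heval : ζ ^ i * (Polynomial.hasseDeriv i (∑ x : X, (Polynomial.X : Polynomial ℂ) ^ st x)).eval ζ
      = ∑ x : X, ((st x).choose i : ℂ) * ζ ^ (st x) := by
    rw [map_sum, Polynomial.eval_finset_sum, Finset.mul_sum]
    refine Finset.sum_congr rfl fun x _ => ?_
    rw [← Polynomial.monomial_one_right_eq_X_pow, Polynomial.hasseDeriv_monomial,
      Polynomial.eval_monomial, mul_one]
    by_cases hni : i ≤ st x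
    · rw [← mul_assoc, mul_comm (ζ ^ i), mul_assoc, ← pow_add]
      congr 2
      omega
    · rw [Nat.choose_eq_zero_of_lt (by omega)]
      simp
  have hpow : ζ ^ i ≠ 0 := pow_ne_zero _ hζ0
  have := heval.trans hs
  exact (mul_eq_zero.mp this).resolve_left hpow

/-- a combinatorial criterion for divisibility of `Σ_x q^{st(x)}` by `(1+q^m)^r`. -/
theorem stmt15 (m r : ℕ) (hm : 1 ≤ m) {X : Type*} [Fintype X] (st : X → ℕ)
    (h : ∀ l < m, ∀ j < r,
      ∑ x ∈ Finset.univ.filter (fun x => st x % (2 * m) = l), (st x).choose j =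
      ∑ x ∈ Finset.univ.filter (fun x => st x % (2 * m) = l + m), (st x).choose j) :
    (1 + (Polynomial.X : Polynomial ℤ) ^ m) ^ r ∣ ∑ x : X, Polynomial.X ^ st x := by
  classical
  have hmono : ((1 : Polynomial ℤ) + Polynomial.X ^ m).Monic := by
    have := Polynomial.monic_X_pow_add_C (R := ℤ) (a := (1 : ℤ)) (n := m) (by omega)
    simpa [add_comm] using this
  rw [← Polynomial.map_dvd_map (Int.castRingHom ℂ) Int.cast_injective (hmono.pow r)]
  rw [Polynomial.map_pow, Polynomial.map_add, Polynomial.map_one, Polynomial.map_pow,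
    Polynomial.map_X, Polynomial.map_sum]
  simp only [Polynomial.map_pow, Polynomial.map_X]
  set S : Polynomial ℂ := Polynomial.X ^ m - Polynomial.C (-1) with hS
  have hSeq : (1 : Polynomial ℂ) + Polynomial.X ^ m = S := by
    rw [hS, map_neg, Polynomial.C_1, sub_neg_eq_add, add_comm]
  rw [hSeq]
  have hm0 : (m : ℂ) ≠ 0 := Nat.cast_ne_zero.mpr (by omega)
  have hsep : S.Separable := Polynomial.separable_X_pow_sub_C (-1) hm0 (by norm_num)
  have hmonS : S.Monic := Polynomial.monic_X_pow_sub_C _ (by omega)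
  have hsplit : S.Splits := IsAlgClosed.splits S
  have hnodup : S.roots.Nodup := Polynomial.nodup_roots hsep
  have hprod : S = (S.roots.map fun a => Polynomial.X - Polynomial.C a).prod :=
    hsplit.eq_prod_roots_of_monic hmonS
  have hSr : S ^ r = ∏ a ∈ S.roots.toFinset, (Polynomial.X - Polynomial.C a) ^ r := by
    conv_lhs => rw [hprod]
    rw [← Multiset.prod_map_pow, Finset.prod_multiset_map_count]
    refine Finset.prod_congr rfl fun a ha => ?_
    rw [Multiset.count_eq_one_of_mem hnodup (Multiset.mem_toFinset.mp ha), pow_one]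
  rw [hSr]
  refine Finset.prod_dvd_of_coprime ?_ ?_
  · intro a ha b hb hab
    exact (Polynomial.pairwise_coprime_X_sub_C Function.injective_id hab).pow
  · intro a ha
    have haroot : a ∈ S.roots := Multiset.mem_toFinset.mp ha
    have hSne : S ≠ 0 := hmonS.ne_zero
    have heval : S.eval a = 0 := (Polynomial.mem_roots hSne).mp haroot
    have ham : a ^ m = -1 := by
      rw [hS] at heval
      simp only [Polynomial.eval_sub, Polynomial.eval_pow, Polynomial.eval_X,
        Polynomial.eval_C] at heval
      linear_combination heval
    exact aux_pow_sub_dvd _ _ _ (aux_hasse_vanish m r hm st h a ham)
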